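/- Main theorem: Let n be a k-digit natural number with 10 ∤ n and n ≠ r(n). Then there exists a natural number ω > 0 such that for every c ≥ 1, n·ρ_{c,k} is v-palindromic if and only if n·ρ_{c+ω,k} is v-palindromic. -/

import Mathlib

/-- `v n` is the sum of the primes and of the exponents greater than 1
in the prime factorization of `n` (exponents equal to 1 are omitted). -/
def v (n : ℕ) : ℕ :=
  ∑ p ∈ n.primeFactors, (p + if n.factorization p = 1 then 0 else n.factorization p)

/-- decimal digit reversal -/
def r (n : ℕ) : ℕ := Nat.ofDigits 10 (Nat.digits 10 n).reverse

/-- `n` is v-palindromic if `10 ∤ n`, `n ≠ r n` and `v n = v (r n)`. -/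
def VPalindromic (n : ℕ) : Prop := ¬ (10 ∣ n) ∧ n ≠ r n ∧ v n = v (r n)

/-- `ρ_{c,k}` -/
def rho (c k : ℕ) : ℕ := ∑ i ∈ Finset.range c, 10 ^ (k * i)

/-- `φ_{p,δ}(α) = v(p^{α+δ}) - v(p^α)` as an integer. -/
def phi (p δ α : ℕ) : ℤ := (v (p ^ (α + δ)) : ℤ) - (v (p ^ α) : ℤ)

def fz (p α : ℕ) : ℤ := if α = 0 then 0 else (p : ℤ) + if α = 1 then 0 else (α : ℤ)

lemma fz_sub (p a b e e' : ℕ) (h : min e 2 = min e' 2) :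
    fz p (a + e) - fz p (b + e) = fz p (a + e') - fz p (b + e') := by
  unfold fz
  split_ifs <;> push_cast <;> omega

lemma rho_succ (c k : ℕ) : rho (c + 1) k = rho c k + 10 ^ (k * c) := by
  simp [rho, Finset.sum_range_succ]

lemma rho_one (k : ℕ) : rho 1 k = 1 := by simp [rho]

lemma rho_succ' (c k : ℕ) : rho (c + 1) k = 1 + 10 ^ k * rho c k := by
  rw [rho, Finset.sum_range_succ']
  simp only [mul_zero, pow_zero, Nat.mul_succ, pow_add, rho, Finset.mul_sum]
  simp [mul_comm, add_comm]

lemma rho_pos {c : ℕ} (k : ℕ) (hc : 1 ≤ c) : 0 < rho c k := by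
  obtain ⟨c', rfl⟩ := Nat.exists_eq_add_of_le hc
  rw [add_comm, rho_succ']
  positivity

lemma rho_add (c w k : ℕ) : rho (c + w) k = rho c k + 10 ^ (k * c) * rho w k := by
  induction w with
  | zero => simp [rho]
  | succ w ih =>
    rw [← add_assoc, rho_succ, ih, rho_succ, k.mul_add c w, pow_add]
    ring

lemma rho_mod10 {c : ℕ} {k : ℕ} (hk : 1 ≤ k) (hc : 1 ≤ c) : rho c k % 10 = 1 := by
  obtain ⟨c', rfl⟩ := Nat.exists_eq_add_of_le hc
  rw [add_comm, rho_succ']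
  have h10' : (10 : ℕ) ∣ 10 ^ k * rho c' k :=
    Dvd.dvd.mul_right (dvd_pow_self 10 (by omega)) _
  omega

lemma rho_geom (w k t : ℕ) (ht : 10 ^ k = t + 1) : rho w k * t + 1 = 10 ^ (k * w) := by
  induction w with
  | zero => simp [rho]
  | succ w ih =>
    rw [rho_succ, add_mul, k.mul_add, pow_add, ← ih, mul_one, ht]
    ring

lemma r_pos {n : ℕ} (hn : ¬ (10 ∣ n)) : 0 < r n := by
  have hm : n % 10 ≠ 0 := fun h => hn (Nat.dvd_of_mod_eq_zero h)
  have hn0 : 0 < n := by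
    rcases Nat.eq_zero_or_pos n with rfl | h
    · simp at hm
    · exact h
  rw [r, Nat.digits_def' (by norm_num : (1:ℕ) < 10) hn0, List.reverse_cons,
    Nat.ofDigits_append, Nat.ofDigits_singleton]
  have : 0 < 10 ^ (Nat.digits 10 (n / 10)).reverse.length * (n % 10) :=
    Nat.mul_pos (Nat.pow_pos (by norm_num)) (by omega)
  omega

lemma digits_len_eq {n k : ℕ} (hk : 1 ≤ k) (h1 : 10 ^ (k - 1) ≤ n) (h2 : n < 10 ^ k) :
    (Nat.digits 10 n).length = k := by
  have hn0 : n ≠ 0 := by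
    have : 0 < 10 ^ (k - 1) := Nat.pow_pos (by norm_num)
    omega
  rw [Nat.digits_len 10 n (by norm_num) hn0,
    Nat.log_eq_of_pow_le_of_lt_pow h1 (by rwa [Nat.sub_add_cancel hk])]
  omega

lemma digits_len_r {n k : ℕ} (hk : 1 ≤ k) (h1 : 10 ^ (k - 1) ≤ n) (h2 : n < 10 ^ k)
    : ∀ c, 1 ≤ c →
    (Nat.digits 10 (n * rho c k)).length = k * c ∧ r (n * rho c k) = r n * rho c k := by
  intro c hc1
  induction c with
  | zero => omega
  | succ c ih =>
    rcases Nat.eq_or_lt_of_le hc1 with h | h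
    · constructor
      · rw [← h]; simpa [rho_one] using digits_len_eq hk h1 h2
      · rw [← h]; simp [rho_one]
    · have hc' : 1 ≤ c := by omega
      obtain ⟨hlen, hr⟩ := ih hc'
      have hng : n * rho (c + 1) k = n + 10 ^ (Nat.digits 10 n).length * (n * rho c k) := by
        rw [digits_len_eq hk h1 h2, rho_succ', mul_add, mul_one, mul_left_comm]
      have hdig : Nat.digits 10 (n * rho (c + 1) k) =
          Nat.digits 10 n ++ Nat.digits 10 (n * rho c k) := by
        rw [hng, ← Nat.digits_append_digits (by norm_num : (0:ℕ) < 10)]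
      constructor
      · rw [hdig, List.length_append, hlen, digits_len_eq hk h1 h2]; ring
      · rw [r, hdig, List.reverse_append, Nat.ofDigits_append, List.length_reverse, hlen,
          ← r, ← r, hr, rho_succ, mul_add, mul_comm (10 ^ (k * c)) (r n)]

lemma v_eq_sum {x : ℕ} (hx : x ≠ 0) {T : Finset ℕ} (hT : x.primeFactors ⊆ T) :
    (v x : ℤ) = ∑ p ∈ T, fz p (x.factorization p) := by
  have h1 : (v x : ℤ) = ∑ p ∈ x.primeFactors, fz p (x.factorization p) := by
    rw [v]
    push_cast
    apply Finset.sum_congr rfl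
    intro p hp
    have h0 : x.factorization p ≠ 0 := by
      rw [← Finsupp.mem_support_iff, Nat.support_factorization]; exact hp
    simp [fz, h0]
  rw [h1]
  apply Finset.sum_subset hT
  intro p _ hnp
  have h0 : x.factorization p = 0 := by
    rw [← Finsupp.notMem_support_iff, Nat.support_factorization]; exact hnp
  simp [fz, h0]

lemma min_factorization_eq {p x y : ℕ} (hp : p.Prime) (hx : x ≠ 0) (hy : y ≠ 0)
    (h : x % p ^ 2 = y % p ^ 2) : min (x.factorization p) 2 = min (y.factorization p) 2 := by
  have hmod : x % p = y % p :=
    Nat.ModEq.of_dvd (dvd_pow_self p two_ne_zero) (h : x ≡ y [MOD p ^ 2])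
  have h1 : p ∣ x ↔ p ∣ y := by
    rw [Nat.dvd_iff_mod_eq_zero, Nat.dvd_iff_mod_eq_zero, hmod]
  have h2 : p ^ 2 ∣ x ↔ p ^ 2 ∣ y := by
    rw [Nat.dvd_iff_mod_eq_zero, Nat.dvd_iff_mod_eq_zero, h]
  have k1x := (Nat.Prime.pow_dvd_iff_le_factorization hp hx (k := 1)).symm
  have k2x := (Nat.Prime.pow_dvd_iff_le_factorization hp hx (k := 2)).symm
  have k1y := (Nat.Prime.pow_dvd_iff_le_factorization hp hy (k := 1)).symm
  have k2y := (Nat.Prime.pow_dvd_iff_le_factorization hp hy (k := 2)).symm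
  rw [pow_one] at k1x k1y
  rw [← k1x, ← k1y] at h1
  rw [← k2x, ← k2y] at h2
  omega

lemma prime_dvd_ten {p : ℕ} (hp : p.Prime) (h : p ∣ 10) : p = 2 ∨ p = 5 := by
  have : p ∣ 2 * 5 := by norm_num at h ⊢; exact h
  rcases (Nat.Prime.dvd_mul hp).mp this with h2 | h5
  · exact Or.inl ((Nat.prime_dvd_prime_iff_eq hp (by norm_num)).mp h2)
  · exact Or.inr ((Nat.prime_dvd_prime_iff_eq hp (by norm_num)).mp h5)



lemma not_dvd_rho {p c k : ℕ} (hp : p.Prime) (hk : 1 ≤ k) (hc : 1 ≤ c) (hp10 : p ∣ 10) :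
    ¬ p ∣ rho c k := by
  intro hdvd
  have hmod : rho c k % 10 = 1 := rho_mod10 hk hc
  have h := Nat.mod_add_div (rho c k) 10
  have h1 : p ∣ 10 * (rho c k / 10) := hp10.mul_right _
  have h2 : p ∣ 1 := by
    have he : rho c k = 1 + 10 * (rho c k / 10) := by omega
    rw [he] at hdvd
    exact (Nat.dvd_add_right h1).mp (by rwa [add_comm] at hdvd)
  exact Nat.Prime.one_lt hp |>.ne' (Nat.dvd_one.mp h2)

theorem stmt15 (n k : ℕ) (hk : 1 ≤ k) (h1 : 10 ^ (k - 1) ≤ n) (h2 : n < 10 ^ k)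
    (h10 : ¬ (10 ∣ n)) (hnr : n ≠ r n) :
    ∃ ω : ℕ, 0 < ω ∧ ∀ c : ℕ, 1 ≤ c →
      (VPalindromic (n * rho c k) ↔ VPalindromic (n * rho (c + ω) k)) := by
  set m := r n with hmdef
  have hn0 : n ≠ 0 := by
    have : 0 < 10 ^ (k - 1) := Nat.pow_pos (by norm_num)
    omega
  have hm0 : m ≠ 0 := (r_pos h10).ne'
  set F : Finset ℕ := (n * m).primeFactors.filter (fun p => p ≠ 2 ∧ p ≠ 5) with hF
  set M : ℕ := ∏ p ∈ F, p ^ 2 with hMdef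
  have hM0 : 0 < M := Finset.prod_pos fun p hp =>
    pow_pos (Nat.prime_of_mem_primeFactors (Finset.mem_filter.mp hp).1).pos 2
  set t : ℕ := 10 ^ k - 1 with htdef
  have hNt : 10 ^ k = t + 1 := by
    have : 1 ≤ 10 ^ k := Nat.one_le_pow _ _ (by norm_num)
    omega
  have ht0 : 0 < t := by
    have : (10 : ℕ) ^ 1 ≤ 10 ^ k := Nat.pow_le_pow_right (by norm_num) hk
    omega
  set ω : ℕ := Nat.totient (M * t) with hωdef
  have hω0 : 0 < ω := Nat.totient_pos.mpr (by positivity)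
  -- coprimality of 10^k with M * t
  have hcopM : Nat.Coprime (10 ^ k) M := by
    apply Nat.Coprime.prod_right
    intro p hp
    obtain ⟨hpf, hp2, hp5⟩ := Finset.mem_filter.mp hp
    have hpp := Nat.prime_of_mem_primeFactors hpf
    have hpn10 : ¬ p ∣ 10 := by
      intro h
      rcases prime_dvd_ten hpp h with h | h
      · exact hp2 h
      · exact hp5 h
    have h1 : Nat.Coprime p (10 ^ k) :=
      Nat.Coprime.pow_right _ ((Nat.Prime.coprime_iff_not_dvd hpp).mpr hpn10)
    exact (h1.symm).pow_right _
  have hcop : Nat.Coprime (10 ^ k) (M * t) := by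
    apply Nat.Coprime.mul_right hcopM
    rw [hNt, add_comm t 1]
    exact Nat.coprime_add_self_left.mpr (Nat.coprime_one_left t)
  -- Euler: M ∣ rho ω k
  have heuler : (10 ^ k) ^ ω ≡ 1 [MOD M * t] := Nat.ModEq.pow_totient hcop
  have hpow1 : 1 ≤ (10 ^ k) ^ ω := Nat.one_le_pow _ _ (by positivity)
  have hdvd1 : M * t ∣ (10 ^ k) ^ ω - 1 := (Nat.modEq_iff_dvd' hpow1).mp heuler.symm
  have hgeom : rho ω k * t + 1 = 10 ^ (k * ω) := rho_geom ω k t hNt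
  have hsub : (10 ^ k) ^ ω - 1 = rho ω k * t := by
    rw [← pow_mul]
    omega
  have hMrho : M ∣ rho ω k := by
    rw [hsub] at hdvd1
    exact (Nat.mul_dvd_mul_iff_right ht0).mp hdvd1
  refine ⟨ω, hω0, fun c hc => ?_⟩
  have hρc0 : rho c k ≠ 0 := (rho_pos k hc).ne'
  have hρw0 : rho (c + ω) k ≠ 0 := (rho_pos k (by omega)).ne'
  -- characterization of VPalindromic for these numbers
  have hchar : ∀ d : ℕ, 1 ≤ d →
      (VPalindromic (n * rho d k) ↔ v (n * rho d k) = v (m * rho d k)) := by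
    intro d hd
    have hρ : 0 < rho d k := rho_pos k hd
    have hrr : r (n * rho d k) = m * rho d k :=
      (digits_len_r hk h1 h2 d hd).2
    rw [VPalindromic, hrr]
    constructor
    · exact fun h => h.2.2
    · intro hv
      refine ⟨?_, ?_, hv⟩
      · intro hdvd
        have hmod : rho d k % 10 = 1 := rho_mod10 hk hd
        have hmm : (n * rho d k) % 10 = n % 10 % 10 := by
          rw [Nat.mul_mod, hmod, mul_one]
        have hz : (n * rho d k) % 10 = 0 := Nat.eq_zero_of_dvd_of_lt hdvd |> fun _ => by
          omega
        exact h10 (Nat.dvd_of_mod_eq_zero (by omega))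
      · intro h
        exact hnr (Nat.eq_of_mul_eq_mul_right hρ h)
  rw [hchar c hc, hchar (c + ω) (by omega)]
  -- the integer identity
  have hT0 : n * m * (rho c k * rho (c + ω) k) ≠ 0 := by positivity
  set T : Finset ℕ := (n * m * (rho c k * rho (c + ω) k)).primeFactors with hTdef
  have s1 : (n * rho c k).primeFactors ⊆ T :=
    Nat.primeFactors_mono ⟨m * rho (c + ω) k, by ring⟩ hT0
  have s2 : (m * rho c k).primeFactors ⊆ T :=
    Nat.primeFactors_mono ⟨n * rho (c + ω) k, by ring⟩ hT0
  have s3 : (n * rho (c + ω) k).primeFactors ⊆ T :=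
    Nat.primeFactors_mono ⟨m * rho c k, by ring⟩ hT0
  have s4 : (m * rho (c + ω) k).primeFactors ⊆ T :=
    Nat.primeFactors_mono ⟨n * rho c k, by ring⟩ hT0
  have hv : (v (n * rho c k) : ℤ) - v (m * rho c k)
      = (v (n * rho (c + ω) k) : ℤ) - v (m * rho (c + ω) k) := by
    rw [v_eq_sum (by positivity) s1, v_eq_sum (by positivity) s2,
      v_eq_sum (by positivity) s3, v_eq_sum (by positivity) s4,
      ← Finset.sum_sub_distrib, ← Finset.sum_sub_distrib]
    apply Finset.sum_congr rfl
    intro p hp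
    have hpp : p.Prime := Nat.prime_of_mem_primeFactors hp
    rw [Nat.factorization_mul hn0 hρc0, Nat.factorization_mul hm0 hρc0,
      Nat.factorization_mul hn0 hρw0, Nat.factorization_mul hm0 hρw0]
    simp only [Finsupp.add_apply]
    by_cases hab : n.factorization p = m.factorization p
    · rw [hab]
      simp
    · -- p divides n * m
      have hdvdnm : p ∣ n * m := by
        by_contra hnd
        have hn' : ¬ p ∣ n := fun h => hnd (h.mul_right m)
        have hm' : ¬ p ∣ m := fun h => hnd (h.mul_left n)
        rw [Nat.factorization_eq_zero_of_not_dvd hn',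
          Nat.factorization_eq_zero_of_not_dvd hm'] at hab
        exact hab rfl
      apply fz_sub
      by_cases hp25 : p = 2 ∨ p = 5
      · have hp10 : p ∣ 10 := by rcases hp25 with rfl | rfl <;> norm_num
        rw [Nat.factorization_eq_zero_of_not_dvd (not_dvd_rho hpp hk hc hp10),
          Nat.factorization_eq_zero_of_not_dvd (not_dvd_rho hpp hk (by omega) hp10)]
      · push_neg at hp25
        have hpF : p ∈ F := by
          rw [hF, Finset.mem_filter]
          exact ⟨Nat.mem_primeFactors.mpr ⟨hpp, hdvdnm, by positivity⟩, hp25⟩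
        have hp2M : p ^ 2 ∣ M := Finset.dvd_prod_of_mem (fun p => p ^ 2) hpF
        have hp2rho : p ^ 2 ∣ rho ω k := hp2M.trans hMrho
        have hmodeq : rho c k % p ^ 2 = rho (c + ω) k % p ^ 2 := by
          obtain ⟨d, hd⟩ : p ^ 2 ∣ 10 ^ (k * c) * rho ω k := hp2rho.mul_left _
          rw [rho_add, hd, Nat.add_mul_mod_self_left]
        exact min_factorization_eq hpp hρc0 hρw0 hmodeq
  omega
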